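/- Let λ > 0, t₀ ∈ ℝ, and let V : (−∞, t₀) → ℝ be continuous. Let w₁ : (−∞, t₀) → ℝ be a twice continuously differentiable function with w₁ > 0 on (−∞, t₀), satisfying w₁''(t) + V(t)·w₁(t) = 0 for all t < t₀ and w₁(t)·exp(λ·t) → 1 as t → −∞. Then for every t < t₀ the integral ∫_{−∞}^t w₁(s)^{−2} ds is finite, the function w₂(t) := w₁(t)·∫_{−∞}^t w₁(s)^{−2} ds is a twice continuously differentiable solution of w₂''(t) + V(t)·w₂(t) = 0 on (−∞, t₀), w₂ is linearly independent from w₁, and w₂(t)·exp(−λ·t) → 1/(2λ) as t → −∞. -/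
import Mathlib
open Set Filter MeasureTheory intervalIntegral Real

lemma stmt17_expII {c : ℝ} (hc : 0 < c) (a b : ℝ) :
    ∫ s in a..b, Real.exp (c * s) = (Real.exp (c * b) - Real.exp (c * a)) / c := by
  rw [intervalIntegral.integral_comp_mul_left Real.exp hc.ne', integral_exp, smul_eq_mul]
  field_simp

lemma stmt17_expIic {c : ℝ} (hc : 0 < c) (t : ℝ) :
    MeasureTheory.IntegrableOn (fun s => Real.exp (c * s)) (Set.Iic t) := by
  refine integrableOn_Iic_of_intervalIntegral_norm_bounded (Real.exp (c * t) / c) t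
    (fun y => ((Real.continuous_exp.comp (continuous_const.mul continuous_id)).integrableOn_Ioc))
    tendsto_id ?_
  filter_upwards [eventually_le_atBot t] with y hy
  simp_rw [Real.norm_of_nonneg (Real.exp_pos _).le, stmt17_expII hc]
  have h0 : (0:ℝ) ≤ Real.exp (c * y) := (Real.exp_pos _).le
  simp only [id_eq]
  gcongr
  linarith

lemma stmt17_expIicVal {c : ℝ} (hc : 0 < c) (t : ℝ) :
    ∫ s in Set.Iic t, Real.exp (c * s) = Real.exp (c * t) / c := by
  refine tendsto_nhds_unique
    (intervalIntegral_tendsto_integral_Iic t (stmt17_expIic hc t) tendsto_id) ?_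
  simp_rw [stmt17_expII hc]
  have h1 : Filter.Tendsto (fun y : ℝ => Real.exp (c * y)) Filter.atBot (nhds 0) :=
    Real.tendsto_exp_atBot.comp (Filter.tendsto_id.const_mul_atBot hc)
  have := (tendsto_const_nhds (x := Real.exp (c * t)) (f := Filter.atBot)).sub h1
  simpa using this.div_const c

/-- reduction of order: from a positive solution `w₁` of
`w'' + V w = 0` with `w₁(t) e^{λ t} → 1` at `-∞`, the function
`w₂(t) = w₁(t) ∫_{-∞}^t w₁(s)⁻² ds` is a second, linearly independent
solution with `w₂(t) e^{-λ t} → 1/(2λ)`. -/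
theorem stmt17 (lam t0 : ℝ) (hlam : 0 < lam)
    (V w1 : ℝ → ℝ) (hV : ContinuousOn V (Set.Iio t0))
    (hw1 : ContDiffOn ℝ 2 w1 (Set.Iio t0))
    (hw1pos : ∀ t < t0, 0 < w1 t)
    (hode : ∀ t < t0, deriv (deriv w1) t + V t * w1 t = 0)
    (hlim : Filter.Tendsto (fun t => w1 t * Real.exp (lam * t)) Filter.atBot (nhds 1)) :
    (∀ t < t0, MeasureTheory.IntegrableOn (fun s => (w1 s ^ 2)⁻¹) (Set.Iic t)) ∧
    ContDiffOn ℝ 2 (fun t => w1 t * ∫ s in Set.Iic t, (w1 s ^ 2)⁻¹) (Set.Iio t0) ∧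
    (∀ t < t0,
      deriv (deriv (fun t => w1 t * ∫ s in Set.Iic t, (w1 s ^ 2)⁻¹)) t
        + V t * (w1 t * ∫ s in Set.Iic t, (w1 s ^ 2)⁻¹) = 0) ∧
    (∀ a : ℝ, ∃ t < t0, w1 t * (∫ s in Set.Iic t, (w1 s ^ 2)⁻¹) ≠ a * w1 t) ∧
    (∀ a : ℝ, ∃ t < t0, w1 t ≠ a * (w1 t * ∫ s in Set.Iic t, (w1 s ^ 2)⁻¹)) ∧
    Filter.Tendsto
      (fun t => (w1 t * ∫ s in Set.Iic t, (w1 s ^ 2)⁻¹) * Real.exp (-lam * t))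
      Filter.atBot (nhds (1 / (2 * lam))) := by
  have hopen : IsOpen (Set.Iio t0) := isOpen_Iio
  set f : ℝ → ℝ := fun s => (w1 s ^ 2)⁻¹ with hfdef
  set g : ℝ → ℝ := fun t => ∫ s in Set.Iic t, f s with hgdef
  have hw1c : ContinuousOn w1 (Set.Iio t0) := hw1.continuousOn
  have hw1ne : ∀ t ∈ Set.Iio t0, w1 t ^ 2 ≠ 0 := fun t ht => (pow_pos (hw1pos t ht) 2).ne'
  have hfc : ContinuousOn f (Set.Iio t0) := (hw1c.pow 2).inv₀ hw1ne
  have hfpos : ∀ t < t0, 0 < f t := fun t ht => inv_pos.2 (pow_pos (hw1pos t ht) 2)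
  have h2lam : (0:ℝ) < 2 * lam := by linarith
  have hexp2 : ∀ s : ℝ, Real.exp (lam * s) ^ 2 = Real.exp (2 * lam * s) := by
    intro s; rw [sq, ← Real.exp_add]; ring_nf
  -- key asymptotics of f
  have key : Filter.Tendsto (fun s => f s / Real.exp (2 * lam * s)) Filter.atBot (nhds 1) := by
    have h1 : Filter.Tendsto (fun s => ((w1 s * Real.exp (lam * s)) ^ 2)⁻¹)
        Filter.atBot (nhds 1) := by
      have := ((hlim.pow 2).inv₀ (by norm_num : (1:ℝ)^2 ≠ 0))
      simpa using this
    refine h1.congr fun s => ?_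
    rw [mul_pow, hexp2, mul_inv]
    simp [hfdef, div_eq_mul_inv]
  -- band bounds
  have hband : ∀ δ : ℝ, 0 < δ → ∃ T < t0, ∀ s ≤ T,
      (1 - δ) * Real.exp (2 * lam * s) ≤ f s ∧ f s ≤ (1 + δ) * Real.exp (2 * lam * s) := by
    intro δ hδ
    have h := (Metric.tendsto_nhds.1 key δ hδ).and (eventually_lt_atBot t0)
    obtain ⟨T, hT⟩ := Filter.eventually_atBot.1 h
    refine ⟨T, (hT T le_rfl).2, fun s hs => ?_⟩
    have h1 := (hT s hs).1
    rw [Real.dist_eq] at h1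
    obtain ⟨hl, hr⟩ := abs_lt.1 h1
    have he : (0:ℝ) < Real.exp (2 * lam * s) := Real.exp_pos _
    have hfe : f s = f s / Real.exp (2 * lam * s) * Real.exp (2 * lam * s) :=
      (div_mul_cancel₀ _ he.ne').symm
    constructor <;> nlinarith
  -- integrability
  have hInt : ∀ t < t0, MeasureTheory.IntegrableOn f (Set.Iic t) := by
    obtain ⟨T, hT, hband1⟩ := hband 1 one_pos
    intro t ht
    have hcT : min t T ≤ T := min_le_right _ _
    have hsub : Set.Iic (min t T) ⊆ Set.Iio t0 := fun s hs =>
      lt_of_le_of_lt (le_trans hs hcT) hT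
    have h1 : MeasureTheory.IntegrableOn f (Set.Iic (min t T)) := by
      have hg2 : MeasureTheory.IntegrableOn (fun s => 2 * Real.exp (2 * lam * s))
          (Set.Iic (min t T)) := (stmt17_expIic h2lam (min t T)).const_mul 2
      refine MeasureTheory.Integrable.mono' hg2
        ((hfc.mono hsub).aestronglyMeasurable measurableSet_Iic) ?_
      filter_upwards [MeasureTheory.ae_restrict_mem measurableSet_Iic] with s hs
      have hb := (hband1 s (le_trans hs hcT)).2
      rw [Real.norm_of_nonneg (hfpos s (hsub hs)).le]
      linarith
    have h2 : MeasureTheory.IntegrableOn f (Set.Ioc (min t T) t) := by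
      have hsub2 : Set.Icc (min t T) t ⊆ Set.Iio t0 := fun s hs => lt_of_le_of_lt hs.2 ht
      exact ((hfc.mono hsub2).integrableOn_Icc).mono_set Set.Ioc_subset_Icc_self
    have h3 := h1.union h2
    rwa [Set.Iic_union_Ioc_eq_Iic (min_le_left t T)] at h3
  -- FTC
  have hgderiv : ∀ t < t0, HasDerivAt g (f t) t := by
    intro t ht
    have hmeas : StronglyMeasurableAtFilter f (nhds t) :=
      ⟨Set.Iio t0, hopen.mem_nhds ht, hfc.aestronglyMeasurable hopen.measurableSet⟩
    have hd : HasDerivAt (fun u => g t + ∫ s in t..u, f s) (f t) t :=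
      (intervalIntegral.integral_hasDerivAt_right (IntervalIntegrable.refl)
        hmeas (hfc.continuousAt (hopen.mem_nhds ht))).const_add (g t)
    refine hd.congr_of_eventuallyEq ?_
    filter_upwards [hopen.mem_nhds ht] with u hu
    have hsub := intervalIntegral.integral_Iic_sub_Iic (hInt t ht) (hInt u hu)
    simp only [hgdef]
    linarith
  have hgderivEq : Set.EqOn (deriv g) f (Set.Iio t0) := fun t ht => (hgderiv t ht).deriv
  have hfCD : ContDiffOn ℝ 1 f (Set.Iio t0) :=
    ((hw1.of_le (by norm_num)).pow 2).inv hw1ne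
  have hgCD : ContDiffOn ℝ 2 g (Set.Iio t0) := by
    have h12 : ((1:WithTop ℕ∞) + 1) = 2 := by norm_num
    rw [← h12]
    refine (contDiffOn_succ_iff_deriv_of_isOpen hopen).2
      ⟨fun t ht => (hgderiv t ht).differentiableAt.differentiableWithinAt,
       fun h => by simp at h, hfCD.congr fun t ht => hgderivEq ht⟩
  have hw2CD : ContDiffOn ℝ 2 (fun t => w1 t * g t) (Set.Iio t0) := hw1.mul hgCD
  -- derivatives of w1
  have hd1 : ∀ u < t0, HasDerivAt w1 (deriv w1 u) u := fun u hu =>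
    ((hw1.differentiableOn (by norm_num)).differentiableAt (hopen.mem_nhds hu)).hasDerivAt
  have hw1dCD : ContDiffOn ℝ 1 (deriv w1) (Set.Iio t0) := by
    have h12 : ((1:WithTop ℕ∞) + 1) = 2 := by norm_num
    have := (contDiffOn_succ_iff_deriv_of_isOpen hopen).1 (h12 ▸ hw1)
    exact this.2.2
  have hd2 : ∀ u < t0, HasDerivAt (deriv w1) (deriv (deriv w1) u) u := fun u hu =>
    ((hw1dCD.differentiableOn (by norm_num)).differentiableAt (hopen.mem_nhds hu)).hasDerivAt
  -- the ODE
  have hODE : ∀ t < t0, deriv (deriv (fun t => w1 t * g t)) t + V t * (w1 t * g t) = 0 := by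
    intro t ht
    have hw2d : Set.EqOn (deriv (fun u => w1 u * g u))
        (fun u => deriv w1 u * g u + w1 u * f u) (Set.Iio t0) := fun u hu =>
      ((hd1 u hu).mul (hgderiv u hu)).deriv
    have hEv : deriv (fun u => w1 u * g u) =ᶠ[nhds t]
        (fun u => deriv w1 u * g u + w1 u * f u) :=
      Filter.eventuallyEq_of_mem (hopen.mem_nhds ht) hw2d
    rw [hEv.deriv_eq]
    have hfd : HasDerivAt f (-(2 * w1 t ^ 1 * deriv w1 t) / (w1 t ^ 2) ^ 2) t :=
      ((hd1 t ht).pow 2).inv (hw1ne t ht)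
    have hsum : HasDerivAt (fun u => deriv w1 u * g u + w1 u * f u)
        (deriv (deriv w1) t * g t + deriv w1 t * f t +
          (deriv w1 t * f t + w1 t * (-(2 * w1 t ^ 1 * deriv w1 t) / (w1 t ^ 2) ^ 2))) t :=
      ((hd2 t ht).mul (hgderiv t ht)).add ((hd1 t ht).mul hfd)
    rw [hsum.deriv]
    have hw1t : w1 t ≠ 0 := (hw1pos t ht).ne'
    have hodet : deriv (deriv w1) t = -(V t * w1 t) := by linarith [hode t ht]
    rw [hodet]
    simp only [hfdef]
    field_simp
    ring
  -- monotonicity: two points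
  have hglt : g (t0 - 2) < g (t0 - 1) := by
    have h1 : t0 - 2 < t0 := by linarith
    have h2 : t0 - 1 < t0 := by linarith
    have hii : IntervalIntegrable f MeasureTheory.volume (t0 - 2) (t0 - 1) :=
      (intervalIntegrable_iff_integrableOn_Ioc_of_le (by linarith)).2
        ((hInt (t0 - 1) h2).mono_set Set.Ioc_subset_Iic_self)
    have hpos := intervalIntegral_pos_of_pos_on hii
      (fun x hx => hfpos x (by rcases hx with ⟨_, hx2⟩; linarith)) (by linarith)
    have hsub := intervalIntegral.integral_Iic_sub_Iic (hInt (t0-2) h1) (hInt (t0-1) h2)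
    simp only [hgdef]
    linarith
  have hli1 : ∀ a : ℝ, ∃ t < t0, w1 t * g t ≠ a * w1 t := by
    intro a
    by_contra hcon
    push_neg at hcon
    have e1 : g (t0 - 2) = a := by
      have h := hcon (t0 - 2) (by linarith)
      have hp := (hw1pos (t0 - 2) (by linarith)).ne'
      exact mul_left_cancel₀ hp (h.trans (mul_comm a (w1 (t0 - 2))))
    have e2 : g (t0 - 1) = a := by
      have h := hcon (t0 - 1) (by linarith)
      have hp := (hw1pos (t0 - 1) (by linarith)).ne'
      exact mul_left_cancel₀ hp (h.trans (mul_comm a (w1 (t0 - 1))))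
    rw [e1, e2] at hglt; exact lt_irrefl a hglt
  have hli2 : ∀ a : ℝ, ∃ t < t0, w1 t ≠ a * (w1 t * g t) := by
    intro a
    by_contra hcon
    push_neg at hcon
    have e : ∀ t < t0, a * g t = 1 := by
      intro t ht
      have h := hcon t ht
      have hp := (hw1pos t ht).ne'
      have : w1 t * 1 = w1 t * (a * g t) := by linear_combination h
      exact ((mul_left_cancel₀ hp this)).symm
    have e1 := e (t0 - 2) (by linarith)
    have e2 := e (t0 - 1) (by linarith)
    have ha : a ≠ 0 := by intro h0; rw [h0] at e1; simp at e1
    have : g (t0 - 2) = g (t0 - 1) := by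
      have := e1.trans e2.symm
      exact mul_left_cancel₀ ha this
    rw [this] at hglt; exact lt_irrefl _ hglt
  -- the limit
  have hglim : Filter.Tendsto (fun t => g t / Real.exp (2 * lam * t))
      Filter.atBot (nhds (1 / (2 * lam))) := by
    rw [Metric.tendsto_nhds]
    intro ε hε
    set δ : ℝ := min (1/2) (lam * ε) with hδdef
    have hδpos : 0 < δ := lt_min (by norm_num) (by positivity)
    obtain ⟨T, hT, hbd⟩ := hband δ hδpos
    rw [Filter.eventually_atBot]
    refine ⟨T, fun t htT => ?_⟩
    have ht0 : t < t0 := lt_of_le_of_lt htT hT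
    have hel : MeasureTheory.IntegrableOn
        (fun s => (1 - δ) * Real.exp (2 * lam * s)) (Set.Iic t) :=
      (stmt17_expIic h2lam t).const_mul _
    have heu : MeasureTheory.IntegrableOn
        (fun s => (1 + δ) * Real.exp (2 * lam * s)) (Set.Iic t) :=
      (stmt17_expIic h2lam t).const_mul _
    have hlow : (1 - δ) * (Real.exp (2 * lam * t) / (2 * lam)) ≤ g t := by
      have := MeasureTheory.setIntegral_mono_on hel (hInt t ht0) measurableSet_Iic
        (fun s hs => (hbd s (le_trans hs htT)).1)
      rwa [MeasureTheory.integral_const_mul, stmt17_expIicVal h2lam t] at this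
    have hhigh : g t ≤ (1 + δ) * (Real.exp (2 * lam * t) / (2 * lam)) := by
      have := MeasureTheory.setIntegral_mono_on (hInt t ht0) heu measurableSet_Iic
        (fun s hs => (hbd s (le_trans hs htT)).2)
      rwa [MeasureTheory.integral_const_mul, stmt17_expIicVal h2lam t] at this
    have he : (0:ℝ) < Real.exp (2 * lam * t) := Real.exp_pos _
    rw [Real.dist_eq]
    have hx1 : g t / Real.exp (2 * lam * t) ≤ (1 + δ) / (2 * lam) := by
      rw [div_le_div_iff₀ he h2lam]
      calc g t * (2 * lam) ≤ ((1 + δ) * (Real.exp (2 * lam * t) / (2 * lam))) * (2 * lam) := by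
            exact mul_le_mul_of_nonneg_right hhigh h2lam.le
        _ = (1 + δ) * Real.exp (2 * lam * t) := by field_simp
    have hx2 : (1 - δ) / (2 * lam) ≤ g t / Real.exp (2 * lam * t) := by
      rw [div_le_div_iff₀ h2lam he]
      calc (1 - δ) * Real.exp (2 * lam * t)
          = ((1 - δ) * (Real.exp (2 * lam * t) / (2 * lam))) * (2 * lam) := by field_simp
        _ ≤ g t * (2 * lam) := mul_le_mul_of_nonneg_right hlow h2lam.le
    have hδe : δ ≤ lam * ε := min_le_right _ _
    have habs : |g t / Real.exp (2 * lam * t) - 1 / (2 * lam)| ≤ δ / (2 * lam) := by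
      rw [abs_le]
      constructor
      · have : (1 - δ) / (2 * lam) = 1 / (2 * lam) - δ / (2 * lam) := by ring
        linarith [this ▸ hx2]
      · have : (1 + δ) / (2 * lam) = 1 / (2 * lam) + δ / (2 * lam) := by ring
        linarith [this ▸ hx1]
    have : δ / (2 * lam) < ε := by
      rw [div_lt_iff₀ h2lam]
      nlinarith
    linarith
  have hlimit : Filter.Tendsto (fun t => (w1 t * g t) * Real.exp (-lam * t))
      Filter.atBot (nhds (1 / (2 * lam))) := by
    have := hlim.mul hglim
    rw [one_mul] at this
    refine this.congr fun t => ?_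
    have he : Real.exp (2 * lam * t) ≠ 0 := (Real.exp_pos _).ne'
    rw [div_eq_mul_inv, ← Real.exp_neg]
    rw [show w1 t * Real.exp (lam * t) * (g t * Real.exp (-(2 * lam * t)))
        = (w1 t * g t) * (Real.exp (lam * t) * Real.exp (-(2 * lam * t))) by ring,
      ← Real.exp_add]
    ring_nf
  exact ⟨hInt, hw2CD, hODE, hli1, hli2, hlimit⟩
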